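/- Let H̃ be the affine Hecke algebra of the extended affine Weyl group W̃ of type A₂ over A = ℤ[v, v⁻¹], with basis T_w̃ and relations T_x T_y = T_{xy} when ℓ(x) + ℓ(y) = ℓ(xy) and (T_s − v)(T_s + v⁻¹) = 0 for simple s. If w̃, w̃′ ∈ W̃ are strongly conjugate (i.e. related by a chain of elementary strong conjugations w̃′ = x w̃ x⁻¹ with ℓ(w̃′) = ℓ(w̃) and ℓ(x w̃) = ℓ(x) + ℓ(w̃) or ℓ(w̃ x⁻¹) = ℓ(x) + ℓ(w̃)), then T_w̃ ≡ T_w̃′ modulo the commutator A-submodule [H̃, H̃]. -/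

import Mathlib

namespace A2

/-- Bundled data for the extended affine Weyl group `W̃ = P ⋊ W` of type `A₂` (for `PGL₃`),
presented as `W̃ = W_a ⋊ Ω` with simple reflections `s0, s1, s2`, length-zero element `tau`
generating `Ω ≅ ℤ/3`, translations `t (m, n) = t^(m α₁ + n α₂)` for coroot-lattice elements,
and the Iwahori–Matsumoto length function `len`. -/
class A2Data (G : Type*) [Group G] where
  s0 : G
  s1 : G
  s2 : G
  tau : G
  t : ℤ × ℤ → G
  len : G → ℕ
  s0_sq : s0 * s0 = 1
  s1_sq : s1 * s1 = 1
  s2_sq : s2 * s2 = 1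
  braid01 : (s0 * s1) ^ 3 = 1
  braid12 : (s1 * s2) ^ 3 = 1
  braid02 : (s0 * s2) ^ 3 = 1
  tau_cube : tau ^ 3 = 1
  tau_s0 : tau * s0 * tau⁻¹ = s1
  tau_s1 : tau * s1 * tau⁻¹ = s2
  tau_s2 : tau * s2 * tau⁻¹ = s0
  t_add : ∀ a b : ℤ × ℤ, t (a + b) = t a * t b
  s1_t : ∀ m n : ℤ, s1 * t (m, n) * s1⁻¹ = t (n - m, n)
  s2_t : ∀ m n : ℤ, s2 * t (m, n) * s2⁻¹ = t (m, m - n)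
  tau_t : ∀ m n : ℤ, tau * t (m, n) * tau⁻¹ = t (-n, m - n)
  s0_def : s0 = t (1, 1) * (s1 * s2 * s1)
  decomp : ∀ g : G, ∃ (m n : ℤ) (w : G) (j : Fin 3),
    w ∈ ({1, s1, s2, s1 * s2, s2 * s1, s1 * s2 * s1} : Set G) ∧
    g = t (m, n) * w * tau ^ (j : ℕ)
  len_t : ∀ m n : ℤ,
    len (t (m, n)) = (2*m - n).natAbs + (2*n - m).natAbs + (m + n).natAbs
  len_t_s1 : ∀ m n : ℤ,
    len (t (m, n) * s1) = (2*m - n - 1).natAbs + (2*n - m).natAbs + (m + n).natAbs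
  len_t_s2 : ∀ m n : ℤ,
    len (t (m, n) * s2) = (2*m - n).natAbs + (2*n - m - 1).natAbs + (m + n).natAbs
  len_t_s1s2 : ∀ m n : ℤ,
    len (t (m, n) * (s1 * s2)) =
      (2*m - n - 1).natAbs + (2*n - m).natAbs + (m + n - 1).natAbs
  len_t_s2s1 : ∀ m n : ℤ,
    len (t (m, n) * (s2 * s1)) =
      (2*m - n).natAbs + (2*n - m - 1).natAbs + (m + n - 1).natAbs
  len_t_s1s2s1 : ∀ m n : ℤ,
    len (t (m, n) * (s1 * s2 * s1)) =
      (2*m - n - 1).natAbs + (2*n - m - 1).natAbs + (m + n - 1).natAbs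
  len_mul_tau : ∀ g : G, len (g * tau) = len g
  len_tau_mul : ∀ g : G, len (tau * g) = len g

namespace A2Data

variable {G : Type*} [Group G] [A2Data G]

/-- The affine Weyl group `W_a`, the subgroup generated by the simple reflections. -/
def Wa (G : Type*) [Group G] [A2Data G] : Subgroup G :=
  Subgroup.closure {s0, s1, s2}

/-- `y` is `W̃`-conjugate to `x`. -/
def ConjTo (x y : G) : Prop := ∃ g : G, g * x * g⁻¹ = y

/-- The `W̃`-conjugacy class of `x`. -/
def conjClass (x : G) : Set G := {y | ConjTo x y}

def IsConjClass (S : Set G) : Prop := ∃ x : G, S = conjClass x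

/-- `n` is the minimal length of an element of `S`, attained on `S`. -/
def IsMinLen (S : Set G) (n : ℕ) : Prop :=
  (∃ x ∈ S, len x = n) ∧ ∀ x ∈ S, n ≤ len x

/-- The set of simple affine reflections. -/
def simples (G : Type*) [Group G] [A2Data G] : Set G := {s0, s1, s2}

/-- The class `𝕆₁ = {t^{kα₁}s₁, t^{kα₂}s₂, t^{k(α₁+α₂)}s₁s₂s₁ : k ∈ ℤ}`. -/
def O1set (G : Type*) [Group G] [A2Data G] : Set G :=
  {x | ∃ k : ℤ, x = t (k, 0) * s1 ∨ x = t (0, k) * s2 ∨ x = t (k, k) * (s1 * s2 * s1)}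

/-- The class `𝕆₂ = {t^λ s₁s₂, t^λ s₂s₁ : λ ∈ Q}`. -/
def O2set (G : Type*) [Group G] [A2Data G] : Set G :=
  {x | ∃ m n : ℤ, x = t (m, n) * (s1 * s2) ∨ x = t (m, n) * (s2 * s1)}

/-- `C_i = {t^{kα₁+iα₂}s₁, t^{-iα₁+kα₂}s₂, t^{kα₁+(k-i)α₂}s₁s₂s₁ : k ∈ ℤ}`. -/
def Ciset (G : Type*) [Group G] [A2Data G] (i : ℤ) : Set G :=
  {x | ∃ k : ℤ, x = t (k, i) * s1 ∨ x = t (-i, k) * s2 ∨ x = t (k, k - i) * (s1 * s2 * s1)}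

/-- `C'_i = {t^{kα₁-iα₂}s₁, t^{iα₁+kα₂}s₂, t^{(k-i)α₁+kα₂}s₁s₂s₁ : k ∈ ℤ}`. -/
def Ci'set (G : Type*) [Group G] [A2Data G] (i : ℤ) : Set G :=
  {x | ∃ k : ℤ, x = t (k, -i) * s1 ∨ x = t (i, k) * s2 ∨ x = t (k - i, k) * (s1 * s2 * s1)}

/-- `𝕆_{id,τ} = {t^{mα₁+nα₂}τ, t^{mα₁+nα₂}s₁s₂τ : m, n ∈ ℤ}`. -/
def OIdtau (G : Type*) [Group G] [A2Data G] : Set G :=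
  {x | ∃ m n : ℤ, x = t (m, n) * tau ∨ x = t (m, n) * (s1 * s2) * tau}

/-- `𝕆_{i,τ} = {t^{kα₁+iα₂}s₁s₂s₁τ, t^{(k+i-1)α₁+kα₂}s₂τ, t^{(1-i)α₁+kα₂}s₁τ : k ∈ ℤ}`. -/
def Oitau (G : Type*) [Group G] [A2Data G] (i : ℤ) : Set G :=
  {x | ∃ k : ℤ, x = t (k, i) * (s1 * s2 * s1) * tau ∨ x = t (k + i - 1, k) * s2 * tau ∨
    x = t (1 - i, k) * s1 * tau}

/-- One non-length-increasing conjugation step by a simple reflection. -/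
def StepTo (x y : G) : Prop :=
  ∃ s ∈ simples G, y = s * x * s ∧ len y ≤ len x

def RedTo : G → G → Prop := Relation.ReflTransGen StepTo

/-- The relation `≈` of the He–Nie reduction method. -/
def Approx (x y : G) : Prop := RedTo x y ∧ RedTo y x

/-- `f` satisfies the defining reduction recursion for the class polynomials
`f_{w̃,𝕆}`, written as polynomials in the variable `X = v - v⁻¹`. -/
def ClassPolySystem (f : G → Set G → Polynomial ℤ) : Prop :=
  (∀ x : G, (∀ y : G, ConjTo x y → len x ≤ len y) →
    ∀ O : Set G, IsConjClass O → (x ∈ O → f x O = 1) ∧ (x ∉ O → f x O = 0)) ∧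
  (∀ x x1 s : G, (∃ y : G, ConjTo x y ∧ len y < len x) →
    Approx x x1 → s ∈ simples G → len (s * x1 * s) < len x1 → len x1 = len x →
    ∀ O : Set G, f x O = Polynomial.X * f (s * x1) O + f (s * x1 * s) O)

/-- `y` is `δ`-conjugate to `x`. -/
def DConjTo (δ : G ≃* G) (x y : G) : Prop := ∃ g : G, g * x * (δ g)⁻¹ = y

def dConjClass (δ : G ≃* G) (x : G) : Set G := {y | DConjTo δ x y}

def IsDConjClass (δ : G ≃* G) (S : Set G) : Prop := ∃ x : G, S = dConjClass δ x

def DStepTo (δ : G ≃* G) (x y : G) : Prop :=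
  ∃ s ∈ simples G, y = s * x * (δ s)⁻¹ ∧ len y ≤ len x

def DRedTo (δ : G ≃* G) : G → G → Prop := Relation.ReflTransGen (DStepTo δ)

def DApprox (δ : G ≃* G) (x y : G) : Prop := DRedTo δ x y ∧ DRedTo δ y x

/-- `f` satisfies the `δ`-twisted reduction recursion for the class polynomials
`f_{w̃,𝕆}`, written as polynomials in `X = v - v⁻¹`. -/
def DClassPolySystem (δ : G ≃* G) (f : G → Set G → Polynomial ℤ) : Prop :=
  (∀ x : G, (∀ y : G, DConjTo δ x y → len x ≤ len y) →
    ∀ O : Set G, IsDConjClass δ O → (x ∈ O → f x O = 1) ∧ (x ∉ O → f x O = 0)) ∧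
  (∀ x x1 s : G, (∃ y : G, DConjTo δ x y ∧ len y < len x) →
    DApprox δ x x1 → s ∈ simples G → len (s * x1 * (δ s)⁻¹) < len x1 → len x1 = len x →
    ∀ O : Set G, f x O = Polynomial.X * f (s * x1) O + f (s * x1 * (δ s)⁻¹) O)

/-- The diagram automorphism `δ` of `W̃` of type `A₂`: it fixes `s0`, swaps `s1` and
`s2`, inverts `tau`, swaps the coroot coordinates, and preserves lengths. -/
def IsDiagramAut (δ : G ≃* G) : Prop :=
  δ s0 = s0 ∧ δ s1 = s2 ∧ δ s2 = s1 ∧ δ tau = tau⁻¹ ∧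
  (∀ m n : ℤ, δ (t (m, n)) = t (n, m)) ∧ ∀ g : G, len (δ g) = len g

/-- Elementary strong conjugation. -/
def ElemStrongConj (x y : G) : Prop :=
  len x = len y ∧ ∃ g : G, y = g * x * g⁻¹ ∧
    (len (g * x) = len g + len x ∨ len (x * g⁻¹) = len g + len x)

/-- Strong conjugation: a chain of elementary strong conjugations. -/
def StrongConj : G → G → Prop := Relation.ReflTransGen ElemStrongConj

end A2Data

open A2Data

/-- The affine Hecke algebra attached to `W̃`, over `A = ℤ[v, v⁻¹]`, with standard
basis `T` and the quadratic and braid-type multiplication relations. -/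
class HeckeData (G : Type*) [Group G] [A2Data G] (H : Type*) [Ring H]
    [Algebra (LaurentPolynomial ℤ) H] where
  T : G → H
  T_one : T 1 = 1
  T_mul : ∀ x y : G, len (x * y) = len x + len y → T x * T y = T (x * y)
  T_quad : ∀ s ∈ simples G,
    (T s - algebraMap (LaurentPolynomial ℤ) H (LaurentPolynomial.T 1)) *
      (T s + algebraMap (LaurentPolynomial ℤ) H (LaurentPolynomial.T (-1))) = 0

/-- The commutator `ℤ[v,v⁻¹]`-submodule `[H̃, H̃]`. -/
noncomputable def commSub (H : Type*) [Ring H] [Algebra (LaurentPolynomial ℤ) H] :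
    Submodule (LaurentPolynomial ℤ) H :=
  Submodule.span (LaurentPolynomial ℤ) {z : H | ∃ a b : H, z = a * b - b * a}

/-- The `δ`-twisted commutator `ℤ[v,v⁻¹]`-submodule `[H̃, H̃]_δ`. -/
noncomputable def dCommSub {H : Type*} [Ring H] [Algebra (LaurentPolynomial ℤ) H]
    (δH : H →ₐ[LaurentPolynomial ℤ] H) : Submodule (LaurentPolynomial ℤ) H :=
  Submodule.span (LaurentPolynomial ℤ) {z : H | ∃ a b : H, z = a * b - b * (δH a)}

end A2

namespace A2
namespace A2Data

variable {G : Type*} [Group G] [A2Data G]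

lemma s1_inv : (s1 : G)⁻¹ = s1 := inv_eq_of_mul_eq_one_right s1_sq
lemma s2_inv : (s2 : G)⁻¹ = s2 := inv_eq_of_mul_eq_one_right s2_sq

lemma t_zero : (t (0, 0) : G) = 1 := by
  have h := t_add (G := G) (0, 0) (0, 0)
  simp only [Prod.mk_add_mk, add_zero] at h
  exact (left_eq_mul.mp h)

lemma t_inv (a : ℤ × ℤ) : (t a : G)⁻¹ = t (-a) := by
  apply inv_eq_of_mul_eq_one_right
  rw [← t_add, show a + -a = ((0 : ℤ), (0 : ℤ)) from by simp [Prod.ext_iff], t_zero]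

lemma s1_mul_t_aux (m n : ℤ) : (s1 : G) * t (m, n) = t (n - m, n) * s1 := by
  have h := s1_t (G := G) m n
  rw [s1_inv] at h
  calc (s1 : G) * t (m, n) = (s1 * t (m, n) * s1) * s1 := by
        rw [mul_assoc (s1 * t (m, n)), s1_sq, mul_one]
    _ = t (n - m, n) * s1 := by rw [h]

lemma s2_mul_t_aux (m n : ℤ) : (s2 : G) * t (m, n) = t (m, m - n) * s2 := by
  have h := s2_t (G := G) m n
  rw [s2_inv] at h
  calc (s2 : G) * t (m, n) = (s2 * t (m, n) * s2) * s2 := by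
        rw [mul_assoc (s2 * t (m, n)), s2_sq, mul_one]
    _ = t (m, m - n) * s2 := by rw [h]

lemma s1_mul_t (m n : ℤ) (x : G) : s1 * (t (m, n) * x) = t (n - m, n) * (s1 * x) := by
  rw [← mul_assoc, s1_mul_t_aux, mul_assoc]

lemma s2_mul_t (m n : ℤ) (x : G) : s2 * (t (m, n) * x) = t (m, m - n) * (s2 * x) := by
  rw [← mul_assoc, s2_mul_t_aux, mul_assoc]

lemma sigma_mul_t (m n : ℤ) (x : G) :
    (s1 * s2 * s1) * (t (m, n) * x) = t (-n, -m) * ((s1 * s2 * s1) * x) := by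
  have h : (s1 * s2 * s1 : G) * (t (m, n) * x) = s1 * (s2 * (s1 * (t (m, n) * x))) := by
    group
  rw [h, s1_mul_t, s2_mul_t, s1_mul_t]
  rw [show ((n - m) - n : ℤ) = -m from by ring]
  rw [show ((-m : ℤ) - (n - m)) = -n from by ring]
  group

lemma sigma_mul_t_aux (m n : ℤ) :
    (s1 * s2 * s1 : G) * t (m, n) = t (-n, -m) * (s1 * s2 * s1) := by
  have h := sigma_mul_t (G := G) m n 1
  simpa using h

lemma s0_mul_t (m n : ℤ) (x : G) :
    s0 * (t (m, n) * x) = t (1 - n, 1 - m) * ((s1 * s2 * s1) * x) := by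
  rw [s0_def, mul_assoc, sigma_mul_t, ← mul_assoc, ← t_add]
  rw [show ((1, 1) + (-n, -m) : ℤ × ℤ) = (1 - n, 1 - m) from by
    simp [Prod.ext_iff, sub_eq_add_neg]]

lemma braid : (s2 : G) * s1 * s2 = s1 * s2 * s1 := by
  have h := braid12 (G := G)
  rw [pow_succ, pow_succ, pow_one] at h
  have h2 : (s1 * s2 : G)⁻¹ = (s1 * s2) * (s1 * s2) := by
    apply inv_eq_of_mul_eq_one_right
    rw [← mul_assoc]; exact h
  have h3 : (s2 : G) * s1 = (s1 * s2) * (s1 * s2) := by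
    rw [← h2, mul_inv_rev, s1_inv, s2_inv]
  rw [h3]
  simp [mul_assoc, s1_sq, s2_sq]

lemma s1_cancel (x : G) : s1 * (s1 * x) = x := by rw [← mul_assoc, s1_sq, one_mul]
lemma s2_cancel (x : G) : s2 * (s2 * x) = x := by rw [← mul_assoc, s2_sq, one_mul]

lemma m1_12 : (s1 : G) * (s1 * s2) = s2 := by rw [← mul_assoc, s1_sq, one_mul]
lemma m1_21 : (s1 : G) * (s2 * s1) = s1 * s2 * s1 := (mul_assoc _ _ _).symm
lemma m1_121 : (s1 : G) * (s1 * s2 * s1) = s2 * s1 := by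
  simp [mul_assoc, s1_cancel]
lemma m2_12 : (s2 : G) * (s1 * s2) = s1 * s2 * s1 := by rw [← mul_assoc, braid]
lemma m2_21 : (s2 : G) * (s2 * s1) = s1 := by rw [← mul_assoc, s2_sq, one_mul]
lemma m2_121 : (s2 : G) * (s1 * s2 * s1) = s1 * s2 := by
  rw [show (s2 : G) * (s1 * s2 * s1) = (s2 * (s1 * s2)) * s1 from by group, m2_12]
  simp [mul_assoc, s1_sq, s2_sq, s1_cancel, s2_cancel]
lemma ms_1 : (s1 * s2 * s1 : G) * s1 = s1 * s2 := by
  simp [mul_assoc, s1_sq, s2_sq, s1_cancel, s2_cancel]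
lemma ms_2 : (s1 * s2 * s1 : G) * s2 = s2 * s1 := by
  rw [show (s1 * s2 * s1 : G) * s2 = s1 * (s2 * (s1 * s2)) from by group, m2_12]
  simp [mul_assoc, s1_sq, s2_sq, s1_cancel, s2_cancel]
lemma ms_12 : (s1 * s2 * s1 : G) * (s1 * s2) = s1 := by
  simp [mul_assoc, s1_sq, s2_sq, s1_cancel, s2_cancel]
lemma ms_21 : (s1 * s2 * s1 : G) * (s2 * s1) = s2 := by
  rw [show (s1 * s2 * s1 : G) * (s2 * s1) = s1 * ((s2 * (s1 * s2)) * s1) from by group, m2_12]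
  simp [mul_assoc, s1_sq, s2_sq, s1_cancel, s2_cancel]
lemma ms_121 : (s1 * s2 * s1 : G) * (s1 * s2 * s1) = 1 := by
  simp [mul_assoc, s1_sq, s2_sq, s1_cancel, s2_cancel]

lemma len_one : len (1 : G) = 0 := by
  rw [← t_zero, len_t]; decide

lemma len_mul_tau_pow (g : G) (j : ℕ) : len (g * tau ^ j) = len g := by
  induction j with
  | zero => simp
  | succ k ih => rw [pow_succ, ← mul_assoc, len_mul_tau, ih]

lemma len_tauinv_mul (g : G) : len ((tau : G)⁻¹ * g) = len g := by
  have h := len_tau_mul (G := G) (tau⁻¹ * g)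
  rw [show (tau : G) * (tau⁻¹ * g) = g from by group] at h
  exact h.symm

lemma len_tau_pow_inv_mul (j : ℕ) (g : G) : len (((tau : G) ^ j)⁻¹ * g) = len g := by
  induction j generalizing g with
  | zero => simp
  | succ k ih =>
    rw [show (((tau : G) ^ (k + 1))⁻¹ * g) = tau⁻¹ * ((tau ^ k)⁻¹ * g) from by
      rw [pow_succ, mul_inv_rev, mul_assoc], len_tauinv_mul, ih]

lemma s0_mem : (s0 : G) ∈ simples G := Set.mem_insert _ _
lemma s1_mem : (s1 : G) ∈ simples G :=
  Set.mem_insert_iff.mpr (Or.inr (Set.mem_insert _ _))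
lemma s2_mem : (s2 : G) ∈ simples G :=
  Set.mem_insert_iff.mpr (Or.inr (Set.mem_insert_iff.mpr (Or.inr rfl)))

lemma len_simple {s : G} (hs : s ∈ simples G) : len s = 1 := by
  simp only [simples, Set.mem_insert_iff, Set.mem_singleton_iff] at hs
  rcases hs with rfl | rfl | rfl
  · rw [s0_def, len_t_s1s2s1]; decide
  · rw [show (s1 : G) = t (0, 0) * s1 from by rw [t_zero, one_mul], len_t_s1]; decide
  · rw [show (s2 : G) = t (0, 0) * s2 from by rw [t_zero, one_mul], len_t_s2]; decide

lemma step_eq (s u : G) {m n m' n' : ℤ} (w w' : G) (j : ℕ)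
    (h1 : ∀ x : G, s * (t (m, n) * x) = t (m', n') * (u * x))
    (h2 : u * w = w') :
    s * (t (m, n) * w * tau ^ j) = t (m', n') * w' * tau ^ j := by
  rw [mul_assoc (t (m, n)) w (tau ^ j), h1, ← mul_assoc u w (tau ^ j), h2, ← mul_assoc]

lemma descent (g : G) (hg : 0 < len g) :
    ∃ s, s ∈ simples G ∧ s * s = 1 ∧ len (s * g) + 1 = len g := by
  obtain ⟨m, n, w, j, hw, rfl⟩ := decomp g
  simp only [Set.mem_insert_iff, Set.mem_singleton_iff] at hw
  rcases hw with rfl | rfl | rfl | rfl | rfl | rfl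
  · -- w = 1
    by_cases hA : 2 * m - n < 0
    · refine ⟨s1, s1_mem, s1_sq, ?_⟩
      rw [step_eq s1 s1 1 s1 (j : ℕ) (s1_mul_t m n) (mul_one s1)]
      simp only [mul_one, len_mul_tau_pow, len_t, len_t_s1] at hg ⊢
      omega
    · by_cases hB : 2 * n - m < 0
      · refine ⟨s2, s2_mem, s2_sq, ?_⟩
        rw [step_eq s2 s2 1 s2 (j : ℕ) (s2_mul_t m n) (mul_one s2)]
        simp only [mul_one, len_mul_tau_pow, len_t, len_t_s2] at hg ⊢
        omega
      · refine ⟨s0, s0_mem, s0_sq, ?_⟩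
        rw [step_eq s0 (s1 * s2 * s1) 1 (s1 * s2 * s1) (j : ℕ) (s0_mul_t m n)
          (mul_one _)]
        simp only [mul_one, len_mul_tau_pow, len_t, len_t_s1s2s1] at hg ⊢
        omega
  · -- w = s1
    by_cases hA : 2 * m - n ≤ 0
    · refine ⟨s1, s1_mem, s1_sq, ?_⟩
      rw [step_eq s1 s1 s1 1 (j : ℕ) (s1_mul_t m n) s1_sq]
      simp only [mul_one, len_mul_tau_pow, len_t, len_t_s1] at hg ⊢
      omega
    · by_cases hB : 2 * n - m < 0
      · refine ⟨s2, s2_mem, s2_sq, ?_⟩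
        rw [step_eq s2 s2 s1 (s2 * s1) (j : ℕ) (s2_mul_t m n) rfl]
        simp only [len_mul_tau_pow, len_t_s1, len_t_s2s1] at hg ⊢
        omega
      · refine ⟨s0, s0_mem, s0_sq, ?_⟩
        rw [step_eq s0 (s1 * s2 * s1) s1 (s1 * s2) (j : ℕ) (s0_mul_t m n) ms_1]
        simp only [len_mul_tau_pow, len_t_s1, len_t_s1s2] at hg ⊢
        omega
  · -- w = s2
    by_cases hB : 2 * n - m ≤ 0
    · refine ⟨s2, s2_mem, s2_sq, ?_⟩
      rw [step_eq s2 s2 s2 1 (j : ℕ) (s2_mul_t m n) s2_sq]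
      simp only [mul_one, len_mul_tau_pow, len_t, len_t_s2] at hg ⊢
      omega
    · by_cases hA : 2 * m - n < 0
      · refine ⟨s1, s1_mem, s1_sq, ?_⟩
        rw [step_eq s1 s1 s2 (s1 * s2) (j : ℕ) (s1_mul_t m n) rfl]
        simp only [len_mul_tau_pow, len_t_s2, len_t_s1s2] at hg ⊢
        omega
      · refine ⟨s0, s0_mem, s0_sq, ?_⟩
        rw [step_eq s0 (s1 * s2 * s1) s2 (s2 * s1) (j : ℕ) (s0_mul_t m n) ms_2]
        simp only [len_mul_tau_pow, len_t_s2, len_t_s2s1] at hg ⊢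
        omega
  · -- w = s1 * s2
    by_cases hA : 2 * m - n ≤ 0
    · refine ⟨s1, s1_mem, s1_sq, ?_⟩
      rw [step_eq s1 s1 (s1 * s2) s2 (j : ℕ) (s1_mul_t m n) m1_12]
      simp only [len_mul_tau_pow, len_t_s1s2, len_t_s2] at hg ⊢
      omega
    · by_cases hB : 2 * n - m < 0
      · refine ⟨s2, s2_mem, s2_sq, ?_⟩
        rw [step_eq s2 s2 (s1 * s2) (s1 * s2 * s1) (j : ℕ) (s2_mul_t m n) m2_12]
        simp only [len_mul_tau_pow, len_t_s1s2, len_t_s1s2s1] at hg ⊢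
        omega
      · refine ⟨s0, s0_mem, s0_sq, ?_⟩
        rw [step_eq s0 (s1 * s2 * s1) (s1 * s2) s1 (j : ℕ) (s0_mul_t m n) ms_12]
        simp only [len_mul_tau_pow, len_t_s1s2, len_t_s1] at hg ⊢
        omega
  · -- w = s2 * s1
    by_cases hB : 2 * n - m ≤ 0
    · refine ⟨s2, s2_mem, s2_sq, ?_⟩
      rw [step_eq s2 s2 (s2 * s1) s1 (j : ℕ) (s2_mul_t m n) m2_21]
      simp only [len_mul_tau_pow, len_t_s2s1, len_t_s1] at hg ⊢
      omega
    · by_cases hA : 2 * m - n < 0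
      · refine ⟨s1, s1_mem, s1_sq, ?_⟩
        rw [step_eq s1 s1 (s2 * s1) (s1 * s2 * s1) (j : ℕ) (s1_mul_t m n) m1_21]
        simp only [len_mul_tau_pow, len_t_s2s1, len_t_s1s2s1] at hg ⊢
        omega
      · refine ⟨s0, s0_mem, s0_sq, ?_⟩
        rw [step_eq s0 (s1 * s2 * s1) (s2 * s1) s2 (j : ℕ) (s0_mul_t m n) ms_21]
        simp only [len_mul_tau_pow, len_t_s2s1, len_t_s2] at hg ⊢
        omega
  · -- w = s1 * s2 * s1
    by_cases hA : 2 * m - n ≤ 0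
    · refine ⟨s1, s1_mem, s1_sq, ?_⟩
      rw [step_eq s1 s1 (s1 * s2 * s1) (s2 * s1) (j : ℕ) (s1_mul_t m n) m1_121]
      simp only [len_mul_tau_pow, len_t_s1s2s1, len_t_s2s1] at hg ⊢
      omega
    · by_cases hB : 2 * n - m ≤ 0
      · refine ⟨s2, s2_mem, s2_sq, ?_⟩
        rw [step_eq s2 s2 (s1 * s2 * s1) (s1 * s2) (j : ℕ) (s2_mul_t m n) m2_121]
        simp only [len_mul_tau_pow, len_t_s1s2s1, len_t_s1s2] at hg ⊢
        omega
      · refine ⟨s0, s0_mem, s0_sq, ?_⟩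
        rw [step_eq s0 (s1 * s2 * s1) (s1 * s2 * s1) 1 (j : ℕ) (s0_mul_t m n) ms_121]
        simp only [mul_one, len_mul_tau_pow, len_t_s1s2s1, len_t] at hg ⊢
        omega

lemma len_inv (g : G) : len g⁻¹ = len g := by
  obtain ⟨m, n, w, j, hw, rfl⟩ := decomp g
  simp only [Set.mem_insert_iff, Set.mem_singleton_iff] at hw
  have hinv : (t (m, n) * w * tau ^ (j : ℕ))⁻¹
      = ((tau : G) ^ (j : ℕ))⁻¹ * (w⁻¹ * (t (m, n))⁻¹) := by group
  rw [hinv, len_tau_pow_inv_mul, t_inv, show (-((m, n) : ℤ × ℤ)) = (-m, -n) from rfl]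
  rcases hw with rfl | rfl | rfl | rfl | rfl | rfl
  · simp only [inv_one, one_mul, mul_one, len_mul_tau_pow, len_t]
    omega
  · rw [s1_inv, s1_mul_t_aux]
    simp only [len_mul_tau_pow, len_t_s1]
    omega
  · rw [s2_inv, s2_mul_t_aux]
    simp only [len_mul_tau_pow, len_t_s2]
    omega
  · rw [show ((s1 * s2 : G))⁻¹ = s2 * s1 from by rw [mul_inv_rev, s1_inv, s2_inv],
      mul_assoc, s1_mul_t_aux, ← mul_assoc, s2_mul_t_aux, mul_assoc]
    simp only [len_mul_tau_pow, len_t_s2s1, len_t_s1s2]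
    omega
  · rw [show ((s2 * s1 : G))⁻¹ = s1 * s2 from by rw [mul_inv_rev, s1_inv, s2_inv],
      mul_assoc, s2_mul_t_aux, ← mul_assoc, s1_mul_t_aux, mul_assoc]
    simp only [len_mul_tau_pow, len_t_s1s2, len_t_s2s1]
    omega
  · rw [show ((s1 * s2 * s1 : G))⁻¹ = s1 * s2 * s1 from by
      rw [mul_inv_rev, mul_inv_rev, s1_inv, s2_inv, mul_assoc],
      sigma_mul_t_aux]
    simp only [len_mul_tau_pow, len_t_s1s2s1]
    omega

lemma eq_tau_pow_of_len_zero (g : G) (h : len g = 0) : ∃ j : ℕ, g = tau ^ j := by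
  obtain ⟨m, n, w, j, hw, rfl⟩ := decomp g
  simp only [Set.mem_insert_iff, Set.mem_singleton_iff] at hw
  rcases hw with rfl | rfl | rfl | rfl | rfl | rfl
  · simp only [mul_one, len_mul_tau_pow, len_t] at h
    have hm : m = 0 := by omega
    have hn : n = 0 := by omega
    subst hm; subst hn
    exact ⟨(j : ℕ), by rw [t_zero, one_mul, one_mul]⟩
  · simp only [len_mul_tau_pow, len_t_s1] at h
    exact absurd h (by omega)
  · simp only [len_mul_tau_pow, len_t_s2] at h
    exact absurd h (by omega)
  · simp only [len_mul_tau_pow, len_t_s1s2] at h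
    exact absurd h (by omega)
  · simp only [len_mul_tau_pow, len_t_s2s1] at h
    exact absurd h (by omega)
  · simp only [len_mul_tau_pow, len_t_s1s2s1] at h
    exact absurd h (by omega)

lemma len_tau_zero : len (tau : G) = 0 := by
  have h := len_mul_tau (G := G) 1
  rw [one_mul] at h
  rw [h, len_one]

lemma len_tau_pow (j : ℕ) : len ((tau : G) ^ j) = 0 := by
  have h := len_mul_tau_pow (1 : G) j
  rw [one_mul] at h
  rw [h, len_one]

end A2Data

section Hecke

open A2Data

variable {G : Type*} [Group G] [A2Data G]
variable {H : Type*} [Ring H] [Algebra (LaurentPolynomial ℤ) H] [HeckeData G H]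

lemma isUnit_T_simple {s : G} (hs : s ∈ simples G) :
    IsUnit (HeckeData.T s : H) := by
  set v1 : H := algebraMap (LaurentPolynomial ℤ) H (LaurentPolynomial.T 1) with hv1
  set v2 : H := algebraMap (LaurentPolynomial ℤ) H (LaurentPolynomial.T (-1)) with hv2
  have hq := HeckeData.T_quad (G := G) (H := H) s hs
  rw [← hv1, ← hv2] at hq
  have hv : v1 * v2 = 1 := by
    rw [hv1, hv2, ← map_mul, ← LaurentPolynomial.T_add]
    norm_num
  have hc1 : v1 * HeckeData.T s = (HeckeData.T s : H) * v1 := Algebra.commutes _ _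
  have hc2 : v2 * HeckeData.T s = (HeckeData.T s : H) * v2 := Algebra.commutes _ _
  have h1 : (HeckeData.T s : H) * (HeckeData.T s + (v2 - v1)) = 1 := by
    have key : (HeckeData.T s : H) * (HeckeData.T s + (v2 - v1))
        = (HeckeData.T s - v1) * (HeckeData.T s + v2) + v1 * v2
          + (v1 * HeckeData.T s - HeckeData.T s * v1) := by noncomm_ring
    rw [key, hq, hv, hc1]
    simp
  have h2 : ((HeckeData.T s : H) + (v2 - v1)) * HeckeData.T s = 1 := by
    have key : ((HeckeData.T s : H) + (v2 - v1)) * HeckeData.T s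
        = (HeckeData.T s - v1) * (HeckeData.T s + v2) + v1 * v2
          + (v2 * HeckeData.T s - HeckeData.T s * v2) := by noncomm_ring
    rw [key, hq, hv, hc2]
    simp
  exact ⟨⟨_, _, h1, h2⟩, rfl⟩

lemma isUnit_T_tau : IsUnit (HeckeData.T (tau : G) : H) := by
  have l1 : len ((tau : G) * tau ^ 2) = len (tau : G) + len ((tau : G) ^ 2) := by
    rw [len_tau_zero, len_tau_pow, show (tau : G) * tau ^ 2 = 1 from by
      rw [← pow_succ', tau_cube], len_one]
  have l2 : len ((tau : G) ^ 2 * tau) = len ((tau : G) ^ 2) + len (tau : G) := by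
    rw [len_tau_zero, len_tau_pow, show (tau : G) ^ 2 * tau = 1 from by
      rw [← pow_succ, tau_cube], len_one]
  have h1 : (HeckeData.T (tau : G) : H) * HeckeData.T ((tau : G) ^ 2) = 1 := by
    rw [HeckeData.T_mul _ _ l1, show (tau : G) * tau ^ 2 = 1 from by
      rw [← pow_succ', tau_cube], HeckeData.T_one]
  have h2 : (HeckeData.T ((tau : G) ^ 2) : H) * HeckeData.T (tau : G) = 1 := by
    rw [HeckeData.T_mul _ _ l2, show (tau : G) ^ 2 * tau = 1 from by
      rw [← pow_succ, tau_cube], HeckeData.T_one]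
  exact ⟨⟨_, _, h1, h2⟩, rfl⟩

lemma isUnit_T_tau_pow (j : ℕ) : IsUnit (HeckeData.T ((tau : G) ^ j) : H) := by
  induction j with
  | zero => simp [HeckeData.T_one]
  | succ k ih =>
    have l : len ((tau : G) ^ k * tau) = len ((tau : G) ^ k) + len (tau : G) := by
      rw [len_tau_zero, len_tau_pow, ← pow_succ, len_tau_pow]
    rw [pow_succ, ← HeckeData.T_mul _ _ l]
    exact ih.mul isUnit_T_tau

lemma isUnit_T (g : G) : IsUnit (HeckeData.T g : H) := by
  suffices h : ∀ N : ℕ, ∀ g : G, len g = N → IsUnit (HeckeData.T g : H) from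
    h (len g) g rfl
  intro N
  induction N using Nat.strong_induction_on with
  | _ N ih =>
    intro g hn
    rcases Nat.eq_zero_or_pos N with rfl | hpos
    · obtain ⟨j, rfl⟩ := eq_tau_pow_of_len_zero g hn
      exact isUnit_T_tau_pow j
    · obtain ⟨s, hs, hss, hlen⟩ := descent g (hn ▸ hpos)
      have hg : g = s * (s * g) := by rw [← mul_assoc, hss, one_mul]
      have hadd : len (s * (s * g)) = len s + len (s * g) := by
        rw [← hg, len_simple hs]
        omega
      rw [hg, ← HeckeData.T_mul s (s * g) hadd]
      exact (isUnit_T_simple hs).mul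
        (ih (len (s * g)) (by omega) (s * g) rfl)

lemma key_step {x y : G} (h : ElemStrongConj x y) :
    (HeckeData.T x : H) - HeckeData.T y ∈ commSub H := by
  obtain ⟨hl, g, rfl, hc⟩ := h
  rcases hc with hc | hc
  · have hyg : (g * x * g⁻¹) * g = g * x := by group
    have e1 : (HeckeData.T (g * x * g⁻¹) : H) * HeckeData.T g
        = HeckeData.T g * HeckeData.T x := by
      rw [HeckeData.T_mul (g * x * g⁻¹) g (by rw [hyg, hc, ← hl]; ring), hyg,
        ← HeckeData.T_mul g x hc]
    obtain ⟨u, hu⟩ := isUnit_T (H := H) g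
    have e1' : (HeckeData.T (g * x * g⁻¹) : H) * ↑u = ↑u * HeckeData.T x := by
      rw [hu]; exact e1
    have hx : (↑u⁻¹ : H) * (HeckeData.T (g * x * g⁻¹) * ↑u) = HeckeData.T x := by
      rw [e1', ← mul_assoc, Units.inv_mul, one_mul]
    have hy' : ((HeckeData.T (g * x * g⁻¹) : H) * ↑u) * ↑u⁻¹
        = HeckeData.T (g * x * g⁻¹) := by
      rw [mul_assoc, Units.mul_inv, mul_one]
    exact Submodule.subset_span ⟨(↑u⁻¹ : H), HeckeData.T (g * x * g⁻¹) * ↑u,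
      by rw [hx, hy']⟩
  · have hxg : x * g⁻¹ = g⁻¹ * (g * x * g⁻¹) := by group
    have e1 : (HeckeData.T x : H) * HeckeData.T g⁻¹
        = HeckeData.T g⁻¹ * HeckeData.T (g * x * g⁻¹) := by
      rw [HeckeData.T_mul x g⁻¹ (by rw [len_inv]; omega), hxg,
        ← HeckeData.T_mul g⁻¹ (g * x * g⁻¹) (by rw [← hxg, len_inv, ← hl]; omega)]
    obtain ⟨u, hu⟩ := isUnit_T (H := H) g⁻¹
    have e1' : (HeckeData.T x : H) * ↑u = ↑u * HeckeData.T (g * x * g⁻¹) := by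
      rw [hu]; exact e1
    have hy2 : (↑u⁻¹ : H) * (HeckeData.T x * ↑u) = HeckeData.T (g * x * g⁻¹) := by
      rw [e1', ← mul_assoc, Units.inv_mul, one_mul]
    have hx2 : ((HeckeData.T x : H) * ↑u) * ↑u⁻¹ = HeckeData.T x := by
      rw [mul_assoc, Units.mul_inv, mul_one]
    exact Submodule.subset_span ⟨(HeckeData.T x : H) * ↑u, (↑u⁻¹ : H),
      by rw [hx2, hy2]⟩

end Hecke

end A2

open A2 A2Data in
/-- If `x` and `y` are strongly conjugate in `W̃`, then `T_x ≡ T_y` modulo the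
commutator submodule `[H̃, H̃]`. -/
theorem statement_8 {G : Type*} [Group G] [A2Data G]
    {H : Type*} [Ring H] [Algebra (LaurentPolynomial ℤ) H] [HeckeData G H]
    (x y : G) (h : StrongConj x y) :
    (HeckeData.T x : H) - HeckeData.T y ∈ commSub H := by
  induction h with
  | refl => rw [sub_self]; exact (commSub H).zero_mem
  | tail hab hbc ih =>
    have h2 := key_step (H := H) hbc
    have h3 := (commSub H).add_mem ih h2
    rwa [sub_add_sub_cancel] at h3
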